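/- Let F ⊆ ℝ^d be measurable, p a probability density on ℝ^d, π : ℝ^d → [0,1] measurable, and α ∈ (0,1]. Set Z = ∫ π(x)^α p(x) dx, P_F = ∫_F p(x) dx, and r = ∫ |π(x) − 𝟙_F(x)| p(x) dx. Then |Z − P_F| ≤ r^α. -/
import Mathlib


open MeasureTheory NNReal ENNReal

lemma aux_le_rpow {a α : ℝ} (ha : 0 ≤ a) (ha1 : a ≤ 1) (hα : 0 < α) (hα1 : α ≤ 1) :
    a ≤ a ^ α := by
  rcases eq_or_lt_of_le ha with h | h
  · simp [← h, Real.zero_rpow hα.ne']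
  · calc a = a ^ (1:ℝ) := (Real.rpow_one a).symm
    _ ≤ a ^ α := Real.rpow_le_rpow_of_exponent_ge h ha1 hα1

/-- For a measurable `F ⊆ ℝ^d`, a probability density `p`, a
measurable `π : ℝ^d → [0,1]`, and `α ∈ (0,1]`, with `Z = ∫ π^α p`, `P_F = ∫_F p`,
and `r = ∫ |π − 𝟙_F| p`, one has `|Z − P_F| ≤ r^α`. -/
theorem stmt_9
    {d : ℕ} (F : Set (Fin d → ℝ)) (hF : MeasurableSet F)
    (p : (Fin d → ℝ) → ℝ)
    (hp_meas : Measurable p) (hp_nonneg : ∀ x, 0 ≤ p x) (hp_int : ∫ x, p x = 1)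
    (π : (Fin d → ℝ) → ℝ) (hπ_meas : Measurable π)
    (hπ01 : ∀ x, π x ∈ Set.Icc (0 : ℝ) 1)
    (α : ℝ) (hα : 0 < α) (hα1 : α ≤ 1)
    (Z PF r : ℝ)
    (hZ : Z = ∫ x, π x ^ α * p x)
    (hPF : PF = ∫ x in F, p x)
    (hr : r = ∫ x, |π x - F.indicator (fun _ => (1 : ℝ)) x| * p x) :
    |Z - PF| ≤ r ^ α := by
  set ind : (Fin d → ℝ) → ℝ := F.indicator (fun _ => (1 : ℝ)) with hind
  have hind_meas : Measurable ind := measurable_const.indicator hF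
  have hind01 : ∀ x, 0 ≤ ind x ∧ ind x ≤ 1 := by
    intro x
    by_cases hx : x ∈ F <;> simp [hind, Set.indicator_apply, hx]
  -- integrability of p
  have hp_integrable : Integrable p := by
    by_contra h
    rw [integral_undef h] at hp_int
    norm_num at hp_int
  -- the probability measure with density p
  set pnn : (Fin d → ℝ) → ℝ≥0 := fun x => (p x).toNNReal with hpnn
  have hpnn_meas : Measurable pnn := measurable_real_toNNReal.comp hp_meas
  set μ : Measure (Fin d → ℝ) := volume.withDensity fun x => (pnn x : ℝ≥0∞) with hμ
  have hconv : ∀ g : (Fin d → ℝ) → ℝ, ∫ x, g x ∂μ = ∫ x, g x * p x := by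
    intro g
    rw [hμ, integral_withDensity_eq_integral_smul hpnn_meas]
    congr 1
    ext x
    simp [hpnn, NNReal.smul_def, Real.coe_toNNReal _ (hp_nonneg x), mul_comm]
  have hprob : IsProbabilityMeasure μ := by
    constructor
    rw [hμ, withDensity_apply _ MeasurableSet.univ, setLIntegral_univ]
    have : ∀ x, ((pnn x : ℝ≥0∞)) = ENNReal.ofReal (p x) := fun x => rfl
    simp only [this]
    rw [← ofReal_integral_eq_lintegral_ofReal hp_integrable (ae_of_all _ hp_nonneg), hp_int,
      ENNReal.ofReal_one]
  -- bounded measurable functions are integrable w.r.t. μ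
  have hbdd : ∀ g : (Fin d → ℝ) → ℝ, Measurable g → (∀ x, |g x| ≤ 1) → Integrable g μ := by
    intro g hg hb
    exact (integrable_const (1 : ℝ)).mono' hg.aestronglyMeasurable (ae_of_all _ hb)
  -- the functions involved
  set f : (Fin d → ℝ) → ℝ := fun x => |π x - ind x| with hf
  have hf_meas : Measurable f := (hπ_meas.sub hind_meas).abs
  have hf01 : ∀ x, 0 ≤ f x ∧ f x ≤ 1 := by
    intro x
    refine ⟨abs_nonneg _, ?_⟩
    have h1 := hπ01 x
    have h2 := hind01 x
    rw [abs_le]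
    constructor <;> [linarith [h1.1, h2.2]; linarith [h1.2, h2.1]]
  have hπα01 : ∀ x, 0 ≤ π x ^ α ∧ π x ^ α ≤ 1 := fun x =>
    ⟨Real.rpow_nonneg (hπ01 x).1 α, Real.rpow_le_one (hπ01 x).1 (hπ01 x).2 hα.le⟩
  have hcont_rpow : Continuous (fun t : ℝ => t ^ α) :=
    continuous_iff_continuousAt.2 fun t => Real.continuousAt_rpow_const t α (Or.inr hα.le)
  have hπα_meas : Measurable fun x => π x ^ α := hcont_rpow.measurable.comp hπ_meas
  have hfα_meas : Measurable fun x => f x ^ α := hcont_rpow.measurable.comp hf_meas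
  -- integrabilities
  have hI1 : Integrable (fun x => π x ^ α) μ :=
    hbdd _ hπα_meas fun x => by rw [abs_le]; constructor <;> linarith [(hπα01 x).1, (hπα01 x).2]
  have hI2 : Integrable ind μ :=
    hbdd _ hind_meas fun x => by rw [abs_le]; constructor <;> linarith [(hind01 x).1, (hind01 x).2]
  have hIf : Integrable f μ :=
    hbdd _ hf_meas fun x => by rw [abs_le]; constructor <;> linarith [(hf01 x).1, (hf01 x).2]
  have hIfα : Integrable (fun x => f x ^ α) μ :=
    hbdd _ hfα_meas fun x => by
      rw [abs_le]
      have h1 := Real.rpow_nonneg (hf01 x).1 α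
      have h2 := Real.rpow_le_one (hf01 x).1 (hf01 x).2 hα.le
      constructor <;> linarith
  -- express Z, PF, r as integrals over μ
  have hZμ : Z = ∫ x, π x ^ α ∂μ := by rw [hZ, hconv]
  have hPFμ : PF = ∫ x, ind x ∂μ := by
    rw [hPF, hconv]
    rw [← integral_indicator hF]
    congr 1
    ext x
    by_cases hx : x ∈ F <;> simp [hind, Set.indicator_apply, hx]
  have hrμ : r = ∫ x, f x ∂μ := by rw [hr, hconv]
  -- pointwise inequality
  have hpoint : ∀ x, |π x ^ α - ind x| ≤ f x ^ α := by
    intro x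
    by_cases hx : x ∈ F
    · have hind1 : ind x = 1 := by simp [hind, Set.indicator_apply, hx]
      have hfx : f x = 1 - π x := by
        rw [hf]
        simp only [hind1]
        rw [abs_of_nonpos (by linarith [(hπ01 x).2])]
        ring
      rw [hind1, hfx, abs_of_nonpos (by linarith [(hπα01 x).2])]
      have h1 : π x ≤ π x ^ α := aux_le_rpow (hπ01 x).1 (hπ01 x).2 hα hα1
      have h2 : 1 - π x ≤ (1 - π x) ^ α :=
        aux_le_rpow (by linarith [(hπ01 x).2]) (by linarith [(hπ01 x).1]) hα hα1
      linarith
    · have hind0 : ind x = 0 := by simp [hind, Set.indicator_apply, hx]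
      have hfx : f x = π x := by
        rw [hf]; simp only [hind0, sub_zero]; exact abs_of_nonneg (hπ01 x).1
      rw [hind0, hfx, sub_zero, abs_of_nonneg (hπα01 x).1]
  -- chain of inequalities
  have step1 : |Z - PF| ≤ ∫ x, |π x ^ α - ind x| ∂μ := by
    rw [hZμ, hPFμ, ← integral_sub hI1 hI2]
    calc |∫ x, (π x ^ α - ind x) ∂μ| = ‖∫ x, (π x ^ α - ind x) ∂μ‖ := (Real.norm_eq_abs _).symm
    _ ≤ ∫ x, ‖π x ^ α - ind x‖ ∂μ := norm_integral_le_integral_norm _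
    _ = ∫ x, |π x ^ α - ind x| ∂μ := by simp [Real.norm_eq_abs]
  have step2 : ∫ x, |π x ^ α - ind x| ∂μ ≤ ∫ x, f x ^ α ∂μ :=
    integral_mono (hI1.sub hI2).abs hIfα hpoint
  have step3 : ∫ x, f x ^ α ∂μ ≤ (∫ x, f x ∂μ) ^ α := by
    have hconc : ConcaveOn ℝ (Set.Ici 0) fun t : ℝ => t ^ α := Real.concaveOn_rpow hα.le hα1
    have hcont : ContinuousOn (fun t : ℝ => t ^ α) (Set.Ici 0) := fun t _ =>
      (Real.continuousAt_rpow_const t α (Or.inr hα.le)).continuousWithinAt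
    exact hconc.le_map_integral hcont isClosed_Ici (ae_of_all _ fun x => (hf01 x).1) hIf hIfα
  rw [hrμ]
  linarith
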